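/- Let D be an acyclic bipartite tournament of order n. The following are equivalent: (1) some tournament completion of D has exactly one augmented (2,1)-dicycle; (2) there exist two vertices u1, u2 in a common partite set of D with outdegree(u1) = outdegree(u2) + 1; (3) D ≅ D_X for some X = {x1 < ... < xn} ⊂ ℤ⁺ with x_l ≡ x_{l+2} ≢ x_{l+1} (mod 2) for some l ∈ [n−2]. -/

import Mathlib

/-- `f` gives the partite set (as a `Bool`) of each vertex; `A` is the arc relation.
`IsBipTournament f A` says `A` is an orientation of the complete bipartite graph with
(nonempty) partite sets `f ⁻¹ true` and `f ⁻¹ false`. -/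
def IsBipTournament {V : Type*} (f : V → Bool) (A : V → V → Prop) : Prop :=
  (∃ v, f v = true) ∧ (∃ v, f v = false) ∧
  (∀ u v, f u = f v → ¬ A u v) ∧ (∀ u v, f u ≠ f v → (A u v ↔ ¬ A v u))

/-- `T` is a tournament (on the whole vertex type). -/
def IsTournament {V : Type*} (T : V → V → Prop) : Prop :=
  (∀ v, ¬ T v v) ∧ ∀ u v, u ≠ v → (T u v ↔ ¬ T v u)

/-- `T` is a tournament completion of the digraph with arc relation `A`. -/
def IsCompletion {V : Type*} (A T : V → V → Prop) : Prop :=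
  IsTournament T ∧ ∀ u v, A u v → T u v
/-- Cyclic successor in `Fin k`. -/
def cyc {k : ℕ} (i : Fin k) : Fin k :=
  ⟨(i.val + 1) % k, Nat.mod_lt _ (lt_of_le_of_lt (Nat.zero_le _) i.isLt)⟩

/-- `c` lists the vertices of a directed cycle of length `k` in the digraph `A`. -/
def IsDicycle {V : Type*} (A : V → V → Prop) (k : ℕ) (c : Fin k → V) : Prop :=
  2 ≤ k ∧ Function.Injective c ∧ ∀ i, A (c i) (c (cyc i))

/-- The digraph `A` has no directed cycle. -/
def Acyclic {V : Type*} (A : V → V → Prop) : Prop :=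
  ¬ ∃ (k : ℕ) (c : Fin k → V), IsDicycle A k c
/-- `c` is an augmented `(2,1)`-dicycle of the completion `T` of the bipartite
tournament `(f, A)`: a directed 3-cycle of `T` using at least one arc not in `A`,
whose three vertices do not all lie in one partite set (hence exactly two in one
partite set and one in the other). -/
def Aug21 {V : Type*} (f : V → Bool) (A T : V → V → Prop) (c : Fin 3 → V) : Prop :=
  Function.Injective c ∧ (∀ i, T (c i) (c (i + 1))) ∧
  (∃ i, ¬ A (c i) (c (i + 1))) ∧ ¬ (f (c 0) = f (c 1) ∧ f (c 1) = f (c 2))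

section Aux
set_option linter.unusedSectionVars false
variable {V : Type*} [Fintype V] [DecidableEq V] {f : V → Bool} {A : V → V → Prop} [DecidableRel A]

lemma aux_irrefl (h : IsBipTournament f A) (v : V) : ¬ A v v :=
  h.2.2.1 v v rfl

lemma aux_flip (h : IsBipTournament f A) {u v : V} (hf : f u ≠ f v) (hA : ¬ A u v) : A v u := by
  by_contra hx
  exact hA ((h.2.2.2 u v hf).mpr hx)

lemma aux_fne (h : IsBipTournament f A) {u v : V} (hA : A u v) : f u ≠ f v :=
  fun he => h.2.2.1 u v he hA

lemma aux_nested (h : IsBipTournament f A) (hacyc : Acyclic A) (u v : V) (hf : f u = f v) :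
    ((Finset.univ.filter fun w => A u w) ⊆ Finset.univ.filter fun w => A v w) ∨
      ((Finset.univ.filter fun w => A v w) ⊆ Finset.univ.filter fun w => A u w) := by
  by_contra hcon
  push_neg at hcon
  obtain ⟨h1, h2⟩ := hcon
  rw [Finset.not_subset] at h1 h2
  obtain ⟨b, hb1, hb2⟩ := h1
  obtain ⟨a, ha1, ha2⟩ := h2
  simp only [Finset.mem_filter, Finset.mem_univ, true_and] at ha1 ha2 hb1 hb2
  -- ha1 : A v a, ha2 : ¬ A u a, hb1 : A u b, hb2 : ¬ A v b
  have hfa : f v ≠ f a := aux_fne h ha1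
  have hfb : f u ≠ f b := aux_fne h hb1
  have hav : A b v := aux_flip h (hf ▸ hfb) hb2
  have hbu : A a u := aux_flip h (hf ▸ hfa : f u ≠ f a) ha2
  have huv : u ≠ v := by
    rintro rfl; exact ha2 ha1
  have hab : a ≠ b := by
    rintro rfl; exact hb2 ha1
  have hua : u ≠ a := fun e => (hf ▸ hfa : f u ≠ f a) (congrArg f e)
  have hub : u ≠ b := fun e => hfb (congrArg f e)
  have hva : v ≠ a := fun e => hfa (congrArg f e)
  have hvb : v ≠ b := fun e => (hf ▸ hfb : f v ≠ f b) (congrArg f e)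
  apply hacyc
  refine ⟨4, (fun i => if i.val = 0 then u else if i.val = 1 then b else if i.val = 2 then v else a), by norm_num, ?_, ?_⟩
  · intro i j hij
    fin_cases i <;> fin_cases j <;> simp_all
  · intro i
    fin_cases i <;> simp [cyc] <;> assumption

end Aux

section Aux2
set_option linter.unusedSectionVars false
variable {V : Type*} [Fintype V] [DecidableEq V] {f : V → Bool} {A : V → V → Prop} [DecidableRel A]

lemma aux_notransgen (h : IsBipTournament f A) (hacyc : Acyclic A) (v : V) :
    ¬ Relation.TransGen A v v := by
  intro hv
  classical
  have hwalk : ∀ a b : V, Relation.TransGen A a b →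
      ∃ k, 0 < k ∧ ∃ c : ℕ → V, c 0 = a ∧ c k = b ∧ ∀ i < k, A (c i) (c (i + 1)) := by
    intro a b hab
    induction hab with
    | @single b hab =>
        exact ⟨1, one_pos, fun i => if i = 0 then a else b, by simp, by simp, by
          intro i hi
          interval_cases i
          simpa using hab⟩
    | @tail b d hab hlast ih =>
        obtain ⟨k, hk, c, hc0, hck, harc⟩ := ih
        refine ⟨k + 1, by omega, fun i => if i ≤ k then c i else d, by simp [hc0], by simp, ?_⟩
        intro i hi
        show A (if i ≤ k then c i else d) (if i + 1 ≤ k then c (i + 1) else d)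
        rcases lt_or_eq_of_le (Nat.lt_succ_iff.mp hi) with hlt | heq
        · rw [if_pos (by omega : i ≤ k), if_pos (by omega : i + 1 ≤ k)]
          exact harc i hlt
        · subst heq
          rw [if_pos le_rfl, if_neg (by omega), hck]
          exact hlast
  obtain ⟨k0, hk0, c0, hc00, hc0k, harc0⟩ := hwalk v v hv
  have hex : ∃ k, 0 < k ∧ ∃ c : ℕ → V, c k = c 0 ∧ ∀ i < k, A (c i) (c (i + 1)) :=
    ⟨k0, hk0, c0, by rw [hc00, hc0k], harc0⟩
  obtain ⟨hkpos, c, hcyc, harc⟩ := Nat.find_spec hex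
  set k := Nat.find hex with hkdef
  have hmin : ∀ m, m < k → ¬(0 < m ∧ ∃ c : ℕ → V, c m = c 0 ∧ ∀ i < m, A (c i) (c (i + 1))) :=
    fun m hm => Nat.find_min hex hm
  have hnorep : ∀ a b : ℕ, a < b → b < k → c a = c b → False := by
    intro a b hab hbk hne
    apply hmin (b - a) (by omega)
    refine ⟨by omega, fun i => c (a + i), ?_, ?_⟩
    · show c (a + (b - a)) = c (a + 0)
      rw [show a + (b - a) = b by omega, show a + 0 = a from rfl]
      exact hne.symm
    · intro i hi
      show A (c (a + i)) (c (a + (i + 1)))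
      rw [show a + (i + 1) = (a + i) + 1 by omega]
      exact harc (a + i) (by omega)
  have hk2 : 2 ≤ k := by
    by_contra h'
    have hk1 : k = 1 := by omega
    have h01 : A (c 0) (c 1) := by simpa using harc 0 (by omega)
    rw [hk1] at hcyc
    rw [hcyc] at h01
    exact aux_irrefl h _ h01
  apply hacyc
  refine ⟨k, fun i => c i.val, hk2, ?_, ?_⟩
  · intro i j hij
    by_contra hne
    have hvne : i.val ≠ j.val := fun e => hne (Fin.ext e)
    rcases Nat.lt_or_ge i.val j.val with hlt | hge
    · exact hnorep i.val j.val hlt j.isLt hij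
    · exact hnorep j.val i.val (by omega) i.isLt hij.symm
  · intro i
    simp only [cyc]
    rcases Nat.lt_or_ge (i.val + 1) k with hlt | hge
    · rw [Nat.mod_eq_of_lt hlt]
      exact harc i.val i.isLt
    · have heq : i.val + 1 = k := by omega
      have hmod : (i.val + 1) % k = 0 := by rw [heq]; exact Nat.mod_self k
      rw [hmod, ← hcyc]
      have hthis := harc i.val i.isLt
      rw [heq] at hthis
      exact hthis

lemma aux_key (h : IsBipTournament f A) (hacyc : Acyclic A) :
    ∃ key : V → ℕ, Function.Injective key ∧ ∀ u v, A u v → key u < key v := by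
  classical
  set K : V → ℕ := fun u => Set.ncard {w | Relation.TransGen A u w} with hK
  have hKmono : ∀ u v, A u v → K v < K u := by
    intro u v huv
    apply Set.ncard_lt_ncard
    · constructor
      · exact fun w hw => Relation.TransGen.head huv hw
      · intro hsub
        exact aux_notransgen h hacyc v (hsub (Relation.TransGen.single huv))
    · exact Set.toFinite _
  set m := Fintype.card V with hm
  set g := Fintype.equivFin V with hg
  set Kmax := Finset.univ.sup K with hKmax
  have hKle : ∀ u, K u ≤ Kmax := fun u => Finset.le_sup (Finset.mem_univ u)
  set key : V → ℕ := fun u => (Kmax - K u) * m + (g u).val with hkey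
  have hmono : ∀ u v : V, K v < K u → key u < key v := by
    intro u v hKlt
    show (Kmax - K u) * m + (g u).val < (Kmax - K v) * m + (g v).val
    have h1 : Kmax - K u < Kmax - K v := by have := hKle u; omega
    have h2 : (Kmax - K u + 1) * m ≤ (Kmax - K v) * m := Nat.mul_le_mul_right m (by omega)
    have h3 : (Kmax - K u + 1) * m = (Kmax - K u) * m + m := by ring
    have h4 : (g u).val < m := (g u).isLt
    omega
  refine ⟨key, ?_, fun u v huv => hmono u v (hKmono u v huv)⟩
  intro u v huv
  rcases lt_trichotomy (K u) (K v) with h' | h' | h'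
  · exact absurd huv (Nat.ne_of_gt (hmono v u h'))
  · have huv' : (Kmax - K u) * m + (g u).val = (Kmax - K v) * m + (g v).val := huv
    rw [h'] at huv'
    exact g.injective (Fin.ext (by omega))
  · exact absurd huv (Nat.ne_of_lt (hmono u v h'))

end Aux2

section Aux3
set_option linter.unusedSectionVars false
variable {V : Type*} [Fintype V] [DecidableEq V] {f : V → Bool} {A : V → V → Prop} [DecidableRel A]

lemma range_fin3 (c : Fin 3 → V) : Set.range c = {c 0, c 1, c 2} := by
  ext y; constructor
  · rintro ⟨i, rfl⟩; fin_cases i <;> simp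
  · rintro (rfl | rfl | rfl) <;> exact ⟨_, rfl⟩

lemma aux_equiv {n : ℕ} (h : IsBipTournament f A) (hacyc : Acyclic A)
    (hcard : Fintype.card V = n) :
    ∃ e : V ≃ Fin n, ∀ u v, A u v ↔ (e u < e v ∧ f u ≠ f v) := by
  obtain ⟨key, hinj, hmono⟩ := aux_key h hacyc
  letI : LinearOrder V := LinearOrder.lift' key hinj
  have hlt : ∀ u v : V, u < v ↔ key u < key v := fun u v => Iff.rfl
  let e0 : Fin n ≃o V := Fintype.orderIsoFinOfCardEq V hcard
  refine ⟨e0.symm.toEquiv, fun u v => ?_⟩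
  have helt : ∀ u v : V, e0.symm u < e0.symm v ↔ u < v := fun u v => e0.symm.lt_iff_lt
  constructor
  · intro hA
    exact ⟨(helt u v).mpr ((hlt u v).mpr (hmono u v hA)), aux_fne h hA⟩
  · rintro ⟨hord, hfne⟩
    by_contra hx
    have hvu : A v u := aux_flip h hfne hx
    have hvu' : e0.symm v < e0.symm u := (helt v u).mpr ((hlt v u).mpr (hmono v u hvu))
    have hord' : e0.symm u < e0.symm v := hord
    exact lt_asymm hord' hvu'
  
lemma aux_cross {T : V → V → Prop} (h : IsBipTournament f A) (hC : IsCompletion A T)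
    {u v : V} (hf : f u ≠ f v) (hT : T u v) : A u v := by
  by_contra hx
  have hvu : T v u := hC.2 v u (aux_flip h hf hx)
  exact (hC.1.2 u v (fun e => hf (congrArg f e))).mp hT hvu

lemma aux_pair {T : V → V → Prop} (h : IsBipTournament f A) (hacyc : Acyclic A)
    (hC : IsCompletion A T) {p q r : V} (hfpq : f p = f q) (hfpr : f p ≠ f r)
    (hTqr : T q r) (hTrp : T r p) :
    r ∈ (Finset.univ.filter fun w => A q w) \ (Finset.univ.filter fun w => A p w) ∧
      (Finset.univ.filter fun w => A p w) ⊆ (Finset.univ.filter fun w => A q w) := by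
  have hAqr : A q r := aux_cross h hC (hfpq ▸ hfpr) hTqr
  have hArp : A r p := aux_cross h hC (Ne.symm hfpr) hTrp
  have hnApr : ¬ A p r := fun hx => (h.2.2.2 p r hfpr).mp hx hArp
  have hmem : r ∈ (Finset.univ.filter fun w => A q w) \ (Finset.univ.filter fun w => A p w) := by
    simp [hAqr, hnApr]
  refine ⟨hmem, ?_⟩
  rcases aux_nested h hacyc p q hfpq with hsub | hsub
  · exact hsub
  · have hthis : r ∈ Finset.filter (fun w => A p w) Finset.univ := hsub (by simp [hAqr])
    simp [hnApr] at hthis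

lemma aux_rot (T : V → V → Prop) (c : Fin 3 → V) (hinj : Function.Injective c)
    (hf3 : ¬(f (c 0) = f (c 1) ∧ f (c 1) = f (c 2))) (harc : ∀ i, T (c i) (c (i + 1))) :
    ∃ p q r : V, f p = f q ∧ f p ≠ f r ∧ T p q ∧ T q r ∧ T r p ∧ p ≠ q ∧
      Set.range c = {p, q, r} := by
  have hTab : T (c 0) (c 1) := by have := harc 0; rwa [show (0 : Fin 3) + 1 = 1 by decide] at this
  have hTbd : T (c 1) (c 2) := by have := harc 1; rwa [show (1 : Fin 3) + 1 = 2 by decide] at this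
  have hTda : T (c 2) (c 0) := by have := harc 2; rwa [show (2 : Fin 3) + 1 = 0 by decide] at this
  have hr := range_fin3 c
  by_cases h1 : f (c 0) = f (c 1)
  · have h2 : f (c 1) ≠ f (c 2) := fun e => hf3 ⟨h1, e⟩
    exact ⟨c 0, c 1, c 2, h1, h1 ▸ h2, hTab, hTbd, hTda,
      fun e => absurd (hinj e) (by decide), hr⟩
  · by_cases h2 : f (c 1) = f (c 2)
    · refine ⟨c 1, c 2, c 0, h2, fun e => h1 e.symm, hTbd, hTda, hTab,
        fun e => absurd (hinj e) (by decide), ?_⟩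
      rw [hr]; ext y; simp; tauto
    · have h3 : f (c 2) = f (c 0) := by
        cases hb0 : f (c 0) <;> cases hb1 : f (c 1) <;> cases hb2 : f (c 2) <;> simp_all
      refine ⟨c 2, c 0, c 1, h3, (fun e => h2 e.symm), hTda, hTab, hTbd,
        fun e => absurd (hinj e) (by decide), ?_⟩
      rw [hr]; ext y; simp; tauto

end Aux3

section Aux4
set_option linter.unusedSectionVars false
set_option maxHeartbeats 1000000
variable {V : Type*} [Fintype V] [DecidableEq V] {f : V → Bool} {A : V → V → Prop} [DecidableRel A]

lemma aux_12 (h : IsBipTournament f A) (hacyc : Acyclic A)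
    (hyp : ∃ T : V → V → Prop, IsCompletion A T ∧
        ∃ c : Fin 3 → V, Aug21 f A T c ∧
          ∀ c' : Fin 3 → V, Aug21 f A T c' → Set.range c' = Set.range c) :
    ∃ u1 u2 : V, f u1 = f u2 ∧
        (Finset.univ.filter fun w => A u1 w).card =
          (Finset.univ.filter fun w => A u2 w).card + 1 := by
  classical
  obtain ⟨T, hC, c, ⟨hinj, harc, _, hf3⟩, huniq⟩ := hyp
  obtain ⟨p, q, r, hfpq, hfpr, hTpq, hTqr, hTrp, hpq, hrange⟩ := aux_rot T c hinj hf3 harc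
  obtain ⟨hmem, hsub⟩ := aux_pair h hacyc hC hfpq hfpr hTqr hTrp
  have hmem' := Finset.mem_sdiff.mp hmem
  have hlt : (Finset.univ.filter fun w => A p w).card < (Finset.univ.filter fun w => A q w).card :=
    Finset.card_lt_card ⟨hsub, fun hs => hmem'.2 (hs hmem'.1)⟩
  by_cases hdq : (Finset.univ.filter fun w => A q w).card =
      (Finset.univ.filter fun w => A p w).card + 1
  · exact ⟨q, p, hfpq.symm, hdq⟩
  · exfalso
    have hc2 : 1 < ((Finset.univ.filter fun w => A q w) \ (Finset.univ.filter fun w => A p w)).card := by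
      rw [Finset.card_sdiff_of_subset hsub]; omega
    obtain ⟨r1, hr1, r2, hr2, hne12⟩ := Finset.one_lt_card.mp hc2
    have hmk : ∀ r' : V, r' ∈ (Finset.univ.filter fun w => A q w) \ (Finset.univ.filter fun w => A p w) →
        Aug21 f A T ![p, q, r'] ∧ f p ≠ f r' := by
      intro r' hr'
      have hr'' := Finset.mem_sdiff.mp hr'
      have hAqr' : A q r' := (Finset.mem_filter.mp hr''.1).2
      have hnApr' : ¬ A p r' := fun hx => hr''.2 (Finset.mem_filter.mp hr''.1 |>.elim (fun _ _ => Finset.mem_filter.mpr ⟨Finset.mem_univ _, hx⟩))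
      have hfqr' : f q ≠ f r' := aux_fne h hAqr'
      have hfpr' : f p ≠ f r' := hfpq ▸ hfqr'
      have hAr'p : A r' p := aux_flip h hfpr' hnApr'
      have hne_pr : p ≠ r' := fun e => hfpr' (congrArg f e)
      have hne_qr : q ≠ r' := fun e => hfqr' (congrArg f e)
      refine ⟨⟨?_, ?_, ⟨0, ?_⟩, ?_⟩, hfpr'⟩
      · intro i j hij
        fin_cases i <;> fin_cases j <;> simp_all
      · intro i
        fin_cases i <;> simp
        · exact hTpq
        · exact hC.2 _ _ hAqr'
        · exact hC.2 _ _ hAr'p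
      · simp
        exact h.2.2.1 p q hfpq
      · simp
        intro _ e
        exact hfqr' e
    obtain ⟨hA1, hf1⟩ := hmk r1 hr1
    obtain ⟨hA2, hf2⟩ := hmk r2 hr2
    have h1 := huniq _ hA1
    have h2 := huniq _ hA2
    have hr1mem : r1 ∈ Set.range ![p, q, r2] := by
      rw [h2, ← h1]
      exact ⟨2, by simp⟩
    rw [range_fin3] at hr1mem
    simp only [Matrix.cons_val_zero, Matrix.cons_val_one, Matrix.head_cons] at hr1mem
    have hfqr1 : f q ≠ f r1 := hfpq ▸ hf1
    rcases hr1mem with hx | hx | hx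
    · exact hf1 (congrArg f hx.symm)
    · exact hfqr1 (congrArg f hx.symm)
    · exact hne12 hx

end Aux4

section Aux5
set_option linter.unusedSectionVars false
set_option maxHeartbeats 1000000
variable {V : Type*} [Fintype V] [DecidableEq V] {f : V → Bool} {A : V → V → Prop} [DecidableRel A]

lemma aux_21 (h : IsBipTournament f A) (hacyc : Acyclic A)
    (hyp : ∃ u1 u2 : V, f u1 = f u2 ∧
        (Finset.univ.filter fun w => A u1 w).card =
          (Finset.univ.filter fun w => A u2 w).card + 1) :
    ∃ T : V → V → Prop, IsCompletion A T ∧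
        ∃ c : Fin 3 → V, Aug21 f A T c ∧
          ∀ c' : Fin 3 → V, Aug21 f A T c' → Set.range c' = Set.range c := by
  classical
  obtain ⟨u1, u2, hf12, hd⟩ := hyp
  set d : V → ℕ := fun u => (Finset.univ.filter fun w => A u w).card with hdd
  have hd' : d u1 = d u2 + 1 := hd
  have hne12 : u1 ≠ u2 := by rintro rfl; omega
  set m := Fintype.card V with hm
  set g := Fintype.equivFin V with hg
  set key2 : V → ℕ := fun u => d u * m + (g u).val with hk2
  have hk2mono : ∀ a b : V, d a < d b → key2 a < key2 b := by
    intro a b hab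
    show d a * m + (g a).val < d b * m + (g b).val
    have h2 : (d a + 1) * m ≤ d b * m := Nat.mul_le_mul_right m (by omega)
    have h3 : (d a + 1) * m = d a * m + m := by ring
    have h4 : (g a).val < m := (g a).isLt
    omega
  have hk2ne : ∀ a b : V, a ≠ b → key2 a ≠ key2 b := by
    intro a b hab
    rcases lt_trichotomy (d a) (d b) with h' | h' | h'
    · exact Nat.ne_of_lt (hk2mono a b h')
    · intro he
      have he' : d a * m + (g a).val = d b * m + (g b).val := he
      rw [h'] at he'
      exact hab (g.injective (Fin.ext (by omega)))
    · exact Nat.ne_of_gt (hk2mono b a h')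
  set T : V → V → Prop := fun u v =>
    if u = u1 ∧ v = u2 then False
    else if u = u2 ∧ v = u1 then True
    else if f u = f v then key2 v < key2 u else A u v with hT
  have hTeval : ∀ u v, T u v = if u = u1 ∧ v = u2 then False
      else if u = u2 ∧ v = u1 then True
      else if f u = f v then key2 v < key2 u else A u v := fun _ _ => rfl
  have hT12 : ¬ T u1 u2 := by rw [hTeval]; simp
  have hT21 : T u2 u1 := by
    rw [hTeval, if_neg (fun hx => hne12 hx.2), if_pos ⟨rfl, rfl⟩]
    trivial
  have hTsame : ∀ u v, ¬(u = u1 ∧ v = u2) → ¬(u = u2 ∧ v = u1) → f u = f v →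
      (T u v ↔ key2 v < key2 u) := by
    intro u v h1 h2 h3
    rw [hTeval, if_neg h1, if_neg h2, if_pos h3]
  have hTcross : ∀ u v, f u ≠ f v → (T u v ↔ A u v) := by
    intro u v hfne
    rw [hTeval, if_neg, if_neg, if_neg hfne]
    · rintro ⟨rfl, rfl⟩; exact hfne hf12.symm
    · rintro ⟨rfl, rfl⟩; exact hfne hf12
  have hTour : IsTournament T := by
    constructor
    · intro v hv
      rw [hTeval] at hv
      by_cases a : v = u1 ∧ v = u2
      · exact hne12 (a.1.symm.trans a.2)
      · rw [if_neg a] at hv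
        by_cases b : v = u2 ∧ v = u1
        · exact hne12 (b.2.symm.trans b.1)
        · rw [if_neg b, if_pos rfl] at hv
          exact lt_irrefl _ hv
    · intro u v hne
      by_cases hc1 : u = u1 ∧ v = u2
      · obtain ⟨rfl, rfl⟩ := hc1
        exact iff_of_false hT12 (not_not_intro hT21)
      · by_cases hc2 : u = u2 ∧ v = u1
        · obtain ⟨rfl, rfl⟩ := hc2
          exact iff_of_true hT21 hT12
        · by_cases hc3 : f u = f v
          · rw [hTsame u v hc1 hc2 hc3,
              hTsame v u (fun hx => hc2 ⟨hx.2, hx.1⟩) (fun hx => hc1 ⟨hx.2, hx.1⟩) hc3.symm]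
            have := hk2ne u v hne
            omega
          · rw [hTcross u v hc3, hTcross v u (Ne.symm hc3)]
            exact h.2.2.2 u v hc3
  have hcompl : ∀ u v, A u v → T u v := by
    intro u v hA
    rw [hTcross u v (aux_fne h hA)]
    exact hA
  -- find the unique w
  have hsub : (Finset.univ.filter fun w => A u2 w) ⊆ (Finset.univ.filter fun w => A u1 w) := by
    rcases aux_nested h hacyc u1 u2 hf12 with hs | hs
    · have := Finset.card_le_card hs
      change d u1 ≤ d u2 at this
      omega
    · exact hs
  have hcard1 : ((Finset.univ.filter fun w => A u1 w) \ (Finset.univ.filter fun w => A u2 w)).card = 1 := by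
    rw [Finset.card_sdiff_of_subset hsub]
    change d u1 - d u2 = 1
    omega
  obtain ⟨w, hw⟩ := Finset.card_eq_one.mp hcard1
  have hwmem : w ∈ (Finset.univ.filter fun w => A u1 w) \ (Finset.univ.filter fun w => A u2 w) := by
    rw [hw]; exact Finset.mem_singleton_self w
  have hwmem' := Finset.mem_sdiff.mp hwmem
  have hA1w : A u1 w := (Finset.mem_filter.mp hwmem'.1).2
  have hnA2w : ¬ A u2 w := fun hx => hwmem'.2 (Finset.mem_filter.mpr ⟨Finset.mem_univ _, hx⟩)
  have hf1w : f u1 ≠ f w := aux_fne h hA1w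
  have hf2w : f u2 ≠ f w := hf12 ▸ hf1w
  have hAw2 : A w u2 := aux_flip h hf2w hnA2w
  have hne1w : u1 ≠ w := fun e => hf1w (congrArg f e)
  have hne2w : u2 ≠ w := fun e => hf2w (congrArg f e)
  refine ⟨T, ⟨hTour, hcompl⟩, ![u2, u1, w], ⟨?_, ?_, ⟨0, ?_⟩, ?_⟩, ?_⟩
  · intro i j hij
    fin_cases i <;> fin_cases j <;> simp_all
  · intro i
    fin_cases i <;> simp
    · exact hT21
    · exact (hTcross u1 w hf1w).mpr hA1w
    · exact (hTcross w u2 (Ne.symm hf2w)).mpr hAw2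
  · simp
    exact h.2.2.1 u2 u1 hf12.symm
  · simp
    intro _ e
    exact hf1w e
  · -- uniqueness
    intro c' hc'
    obtain ⟨hinj', harc', _, hf3'⟩ := hc'
    obtain ⟨p, q, r, hfpq, hfpr, hTpq, hTqr, hTrp, hpq, hrange⟩ := aux_rot T c' hinj' hf3'
      harc'
    obtain ⟨hmem, hsubpq⟩ := aux_pair h hacyc ⟨hTour, hcompl⟩ hfpq hfpr hTqr hTrp
    have hmem'' := Finset.mem_sdiff.mp hmem
    have hdlt : d p < d q :=
      Finset.card_lt_card ⟨hsubpq, fun hs => hmem''.2 (hs hmem''.1)⟩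
    have hklt : key2 p < key2 q := hk2mono p q hdlt
    by_cases hc1 : p = u1 ∧ q = u2
    · exfalso
      obtain ⟨hp1, hq2⟩ := hc1
      rw [hp1, hq2] at hdlt
      omega
    · by_cases hc2 : p = u2 ∧ q = u1
      · obtain ⟨hp2, hq1⟩ := hc2
        have hr : r = w := by
          rw [hp2, hq1] at hmem
          rw [hw] at hmem
          exact Finset.mem_singleton.mp hmem
        rw [hrange, hp2, hq1, hr, range_fin3]
        simp
      · exfalso
        rw [hTsame p q hc1 hc2 hfpq] at hTpq
        omega

end Aux5

section Aux6
set_option linter.unusedSectionVars false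
set_option maxHeartbeats 1000000
variable {V : Type*} [Fintype V] [DecidableEq V] {f : V → Bool} {A : V → V → Prop} [DecidableRel A]

lemma aux_23 {n : ℕ} (h : IsBipTournament f A) (hacyc : Acyclic A)
    (hcard : Fintype.card V = n)
    (hyp : ∃ u1 u2 : V, f u1 = f u2 ∧
        (Finset.univ.filter fun w => A u1 w).card =
          (Finset.univ.filter fun w => A u2 w).card + 1) :
    ∃ x : Fin n → ℕ, StrictMono x ∧ (∀ i, 0 < x i) ∧
        (∃ e : V ≃ Fin n, ∀ u v, A u v ↔
            (x (e u) < x (e v) ∧ x (e u) % 2 ≠ x (e v) % 2)) ∧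
        ∃ l : ℕ, ∃ hl : l + 2 < n,
          x ⟨l, by omega⟩ % 2 = x ⟨l + 2, hl⟩ % 2 ∧
          x ⟨l, by omega⟩ % 2 ≠ x ⟨l + 1, by omega⟩ % 2 := by
  classical
  obtain ⟨e, he⟩ := aux_equiv h hacyc hcard
  set b : Fin n → Bool := fun i => f (e.symm i) with hb
  set x : Fin n → ℕ := fun i => 2 * i.val + 2 + (if b i then 1 else 0) with hx
  have hxmono : StrictMono x := by
    intro i j hij
    have h1 : (if b i then 1 else 0) ≤ 1 := by split <;> omega
    have h2 : (0:ℕ) ≤ (if b j then 1 else 0) := by split <;> omega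
    have h3 : i.val < j.val := hij
    show 2 * i.val + 2 + (if b i then 1 else 0) < 2 * j.val + 2 + (if b j then 1 else 0)
    omega
  have hxpos : ∀ i, 0 < x i := by
    intro i
    show 0 < 2 * i.val + 2 + (if b i then 1 else 0)
    omega
  have hpar : ∀ i, x i % 2 = if b i then 1 else 0 := by
    intro i
    show (2 * i.val + 2 + (if b i then 1 else 0)) % 2 = _
    split <;> omega
  have hparity : ∀ i j : Fin n, (x i % 2 = x j % 2) ↔ b i = b j := by
    intro i j
    rw [hpar, hpar]
    cases hbi : b i <;> cases hbj : b j <;> simp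
  have hfb : ∀ u, f u = b (e u) := fun u => by simp [hb]
  have hiff : ∀ u v, A u v ↔ (x (e u) < x (e v) ∧ x (e u) % 2 ≠ x (e v) % 2) := by
    intro u v
    rw [he u v]
    constructor
    · rintro ⟨h1, h2⟩
      refine ⟨hxmono h1, ?_⟩
      rw [Ne, hparity]
      rw [hfb, hfb] at h2
      exact h2
    · rintro ⟨h1, h2⟩
      refine ⟨hxmono.lt_iff_lt.mp h1, ?_⟩
      rw [hfb, hfb]
      rw [Ne, hparity] at h2
      exact h2
  refine ⟨x, hxmono, hxpos, ⟨e, hiff⟩, ?_⟩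
  -- now find l
  obtain ⟨u1, u2, hf12, hd⟩ := hyp
  set S : Fin n → Finset (Fin n) := fun i => Finset.univ.filter (fun k => i < k ∧ b k ≠ b i)
    with hS
  have hcount : ∀ u : V, (Finset.univ.filter fun w => A u w).card = (S (e u)).card := by
    intro u
    apply Finset.card_equiv e
    intro w
    simp only [Finset.mem_filter, Finset.mem_univ, true_and, hS]
    rw [he u w, hfb u, hfb w]
    constructor
    · rintro ⟨h1, h2⟩; exact ⟨h1, fun hx' => h2 hx'.symm⟩
    · rintro ⟨h1, h2⟩; exact ⟨h1, fun hx' => h2 hx'.symm⟩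
  set i := e u1 with hi
  set j := e u2 with hj
  have hbij : b i = b j := by
    rw [← hfb, ← hfb]; exact hf12
  have hN : (S i).card = (S j).card + 1 := by
    rw [← hcount, ← hcount]; exact hd
  have hilj : i < j := by
    rcases lt_trichotomy i j with h' | h' | h'
    · exact h'
    · exfalso; rw [h'] at hN; omega
    · exfalso
      have hsub : S i ⊆ S j := by
        intro k hk
        simp only [hS, Finset.mem_filter, Finset.mem_univ, true_and] at hk ⊢
        exact ⟨lt_trans h' hk.1, hbij ▸ hk.2⟩
      have := Finset.card_le_card hsub
      omega
  have hsub : S j ⊆ S i := by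
    intro k hk
    simp only [hS, Finset.mem_filter, Finset.mem_univ, true_and] at hk ⊢
    exact ⟨lt_trans hilj hk.1, hbij ▸ hk.2⟩
  have hdiffcard : (S i \ S j).card = 1 := by
    rw [Finset.card_sdiff_of_subset hsub]; omega
  obtain ⟨kk, hkk⟩ := Finset.card_eq_one.mp hdiffcard
  have hkkmem : kk ∈ S i \ S j := by rw [hkk]; exact Finset.mem_singleton_self kk
  have hkkmem' := Finset.mem_sdiff.mp hkkmem
  have hkk1 : i < kk ∧ b kk ≠ b i := by
    have := Finset.mem_filter.mp hkkmem'.1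
    exact this.2
  have hkknJ : ¬ (j < kk) := by
    intro hx'
    exact hkkmem'.2 (Finset.mem_filter.mpr ⟨Finset.mem_univ _, hx', hbij ▸ hkk1.2⟩)
  have hkkltj : kk < j := by
    rcases lt_trichotomy kk j with h' | h' | h'
    · exact h'
    · exfalso; exact hkk1.2 (by rw [h']; exact hbij.symm)
    · exact absurd h' hkknJ
  have huniqk : ∀ k : Fin n, i < k → ¬ (j < k) → b k ≠ b i → k = kk := by
    intro k h1 h2 h3
    have : k ∈ S i \ S j := by
      refine Finset.mem_sdiff.mpr ⟨Finset.mem_filter.mpr ⟨Finset.mem_univ _, h1, h3⟩, ?_⟩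
      intro hx'
      exact h2 (Finset.mem_filter.mp hx').2.1
    rw [hkk] at this
    exact Finset.mem_singleton.mp this
  have hv1 : i.val < kk.val := hkk1.1
  have hv2 : kk.val < j.val := hkkltj
  have hv3 : j.val < n := j.isLt
  have hbl : ∀ hp : kk.val - 1 < n, b ⟨kk.val - 1, hp⟩ = b i := by
    intro hp
    by_cases hli : kk.val - 1 = i.val
    · rw [show (⟨kk.val - 1, hp⟩ : Fin n) = i from Fin.ext hli]
    · by_contra hbne
      have heq := huniqk ⟨kk.val - 1, hp⟩ (by rw [Fin.lt_def]; simp; omega)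
        (by rw [Fin.lt_def]; simp; omega) hbne
      have := congrArg Fin.val heq
      simp at this
      omega
  have hbl2 : ∀ hp : kk.val - 1 + 2 < n, b ⟨kk.val - 1 + 2, hp⟩ = b i := by
    intro hp
    by_cases hlj : kk.val - 1 + 2 = j.val
    · rw [show (⟨kk.val - 1 + 2, hp⟩ : Fin n) = j from Fin.ext hlj]
      exact hbij.symm
    · by_contra hbne
      have heq := huniqk ⟨kk.val - 1 + 2, hp⟩ (by rw [Fin.lt_def]; simp; omega)
        (by rw [Fin.lt_def]; simp; omega) hbne
      have := congrArg Fin.val heq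
      simp at this
      omega
  have hbl1 : ∀ hp : kk.val - 1 + 1 < n, b ⟨kk.val - 1 + 1, hp⟩ = b kk := by
    intro hp
    rw [show (⟨kk.val - 1 + 1, hp⟩ : Fin n) = kk from Fin.ext (by simp; omega)]
  refine ⟨kk.val - 1, by omega, ?_, ?_⟩
  · rw [hpar, hpar, hbl _, hbl2 _]
  · rw [hpar, hpar, hbl _, hbl1 _]
    have hthis := hkk1.2
    cases hbi' : b i <;> cases hbk' : b kk
    · exact absurd (hbk'.trans hbi'.symm) hthis
    · decide
    · decide
    · exact absurd (hbk'.trans hbi'.symm) hthis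

end Aux6

section Aux7
set_option linter.unusedSectionVars false
set_option maxHeartbeats 1000000
variable {V : Type*} [Fintype V] [DecidableEq V] {f : V → Bool} {A : V → V → Prop} [DecidableRel A]

lemma aux_32 {n : ℕ} (h : IsBipTournament f A)
    (hyp : ∃ x : Fin n → ℕ, StrictMono x ∧ (∀ i, 0 < x i) ∧
        (∃ e : V ≃ Fin n, ∀ u v, A u v ↔
            (x (e u) < x (e v) ∧ x (e u) % 2 ≠ x (e v) % 2)) ∧
        ∃ l : ℕ, ∃ hl : l + 2 < n,
          x ⟨l, by omega⟩ % 2 = x ⟨l + 2, hl⟩ % 2 ∧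
          x ⟨l, by omega⟩ % 2 ≠ x ⟨l + 1, by omega⟩ % 2) :
    ∃ u1 u2 : V, f u1 = f u2 ∧
        (Finset.univ.filter fun w => A u1 w).card =
          (Finset.univ.filter fun w => A u2 w).card + 1 := by
  classical
  obtain ⟨x, hxmono, hxpos, ⟨e, hiff⟩, l, hl, hp1, hp2⟩ := hyp
  have hlt0 : l < n := Nat.lt_of_lt_of_le (by omega) (le_of_lt hl) |>.trans_le le_rfl
  have hlt1 : l + 1 < n := by omega
  set i0 : Fin n := ⟨l, hlt0⟩ with hi0
  set i1 : Fin n := ⟨l + 1, hlt1⟩ with hi1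
  set i2 : Fin n := ⟨l + 2, hl⟩ with hi2
  have hp1' : x i0 % 2 = x i2 % 2 := hp1
  have hp2' : x i0 % 2 ≠ x i1 % 2 := hp2
  clear hp1 hp2
  have hv01 : i0 < i1 := by rw [Fin.lt_def]; simp [hi0, hi1]
  have hv02 : i0 < i2 := by rw [Fin.lt_def]; simp [hi0, hi2]
  have hv12 : i1 < i2 := by rw [Fin.lt_def]; simp [hi1, hi2]
  have hfpar : ∀ u v : V, f u = f v ↔ x (e u) % 2 = x (e v) % 2 := by
    intro u v
    constructor
    · intro hfe
      by_contra hne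
      rcases Nat.lt_trichotomy (x (e u)) (x (e v)) with h' | h' | h'
      · exact h.2.2.1 u v hfe ((hiff u v).mpr ⟨h', hne⟩)
      · exact hne (by rw [h'])
      · exact h.2.2.1 v u hfe.symm ((hiff v u).mpr ⟨h', Ne.symm hne⟩)
    · intro hpe
      by_contra hfne
      rcases Classical.em (A u v) with h' | h'
      · exact ((hiff u v).mp h').2 hpe
      · exact ((hiff v u).mp (aux_flip h hfne h')).2 hpe.symm
  have heu1 : e (e.symm i0) = i0 := e.apply_symm_apply _
  have heu2 : e (e.symm i2) = i2 := e.apply_symm_apply _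
  refine ⟨e.symm i0, e.symm i2, ?_, ?_⟩
  · rw [hfpar, heu1, heu2]
    exact hp1'
  · set S : Fin n → Finset (Fin n) :=
      fun i => Finset.univ.filter (fun k => x i < x k ∧ x i % 2 ≠ x k % 2) with hS
    have hcount : ∀ u : V, (Finset.univ.filter fun w => A u w).card = (S (e u)).card := by
      intro u
      apply Finset.card_equiv e
      intro w
      simp only [Finset.mem_filter, Finset.mem_univ, true_and, hS]
      rw [hiff u w]
    rw [hcount, hcount, heu1, heu2]
    have hins : S i0 = insert i1 (S i2) := by
      ext k
      simp only [hS, Finset.mem_filter, Finset.mem_univ, true_and, Finset.mem_insert]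
      constructor
      · rintro ⟨h1, h2⟩
        have hk0 : l < k.val := hxmono.lt_iff_lt.mp h1
        rcases Nat.lt_trichotomy k.val (l + 2) with h' | h' | h'
        · left
          exact Fin.ext (show k.val = l + 1 by omega)
        · exfalso
          have hke : k = i2 := Fin.ext h'
          rw [hke] at h2
          exact h2 hp1'
        · right
          refine ⟨hxmono (show i2 < k from h'), fun hx' => h2 (hp1'.trans hx')⟩
      · rintro (rfl | ⟨h1, h2⟩)
        · exact ⟨hxmono hv01, hp2'⟩
        · exact ⟨lt_trans (hxmono hv02) h1, fun hx' => h2 (hp1'.symm.trans hx')⟩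
    rw [hins, Finset.card_insert_of_notMem]
    intro hx'
    simp only [hS, Finset.mem_filter, Finset.mem_univ, true_and] at hx'
    have h21 : i2 < i1 := hxmono.lt_iff_lt.mp hx'.1
    exact lt_asymm h21 hv12

end Aux7

/-- For an acyclic bipartite tournament `D` of order `n`, the following are
equivalent: (1) some tournament completion of `D` has exactly one augmented
`(2,1)`-dicycle; (2) two vertices `u1, u2` in a common partite set satisfy
`deg⁺(u1) = deg⁺(u2) + 1`; (3) `D ≅ D_X` for some `X = {x_1 < ⋯ < x_n} ⊂ ℤ⁺` with
`x_l ≡ x_{l+2} ≢ x_{l+1} (mod 2)` for some `l ∈ [n-2]`. -/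
theorem stmt_11 {V : Type*} [Fintype V] [DecidableEq V] (n : ℕ)
    (hcard : Fintype.card V = n) (f : V → Bool) (A : V → V → Prop) [DecidableRel A]
    (h : IsBipTournament f A) (hacyc : Acyclic A) :
    ((∃ T : V → V → Prop, IsCompletion A T ∧
        ∃ c : Fin 3 → V, Aug21 f A T c ∧
          ∀ c' : Fin 3 → V, Aug21 f A T c' → Set.range c' = Set.range c) ↔
      (∃ u1 u2 : V, f u1 = f u2 ∧
        (Finset.univ.filter fun w => A u1 w).card =
          (Finset.univ.filter fun w => A u2 w).card + 1)) ∧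
    ((∃ u1 u2 : V, f u1 = f u2 ∧
        (Finset.univ.filter fun w => A u1 w).card =
          (Finset.univ.filter fun w => A u2 w).card + 1) ↔
      (∃ x : Fin n → ℕ, StrictMono x ∧ (∀ i, 0 < x i) ∧
        (∃ e : V ≃ Fin n, ∀ u v, A u v ↔
            (x (e u) < x (e v) ∧ x (e u) % 2 ≠ x (e v) % 2)) ∧
        ∃ l : ℕ, ∃ hl : l + 2 < n,
          x ⟨l, by omega⟩ % 2 = x ⟨l + 2, hl⟩ % 2 ∧
          x ⟨l, by omega⟩ % 2 ≠ x ⟨l + 1, by omega⟩ % 2)) := by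
  constructor
  · exact ⟨fun hyp => aux_12 h hacyc hyp, fun hyp => aux_21 h hacyc hyp⟩
  · exact ⟨fun hyp => aux_23 h hacyc hcard hyp, fun hyp => aux_32 h hyp⟩
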